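/- For the constant angle surface r(u,v) = (u cos θ (cos v, sin v) + γ(v), u sin θ) with unit normal N(v) = (-sin θ cos v, -sin θ sin v, cos θ), the normal is independent of u (N_u = 0), hence the second fundamental form coefficients e = ⟪r_uu, N⟫ and f = ⟪r_uv, N⟫ both vanish, and consequently the Gaussian curvature K = (eg - f²)/(EG - F²) vanishes identically. -/

import Mathlib

open Real


lemma hasDerivAt_e3 {Φ : ℝ → EuclideanSpace ℝ (Fin 3)} {D : EuclideanSpace ℝ (Fin 3)}
    {f1 f2 f3 : ℝ → ℝ} {g1 g2 g3 : ℝ} {x : ℝ}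
    (hΦ : ∀ t, Φ t = ![f1 t, f2 t, f3 t]) (hD : D = ![g1, g2, g3])
    (h1 : HasDerivAt f1 g1 x) (h2 : HasDerivAt f2 g2 x) (h3 : HasDerivAt f3 g3 x) :
    HasDerivAt Φ D x := by
  have h : HasDerivAt (fun t => (![f1 t, f2 t, f3 t] : Fin 3 → ℝ)) (![g1, g2, g3] : Fin 3 → ℝ) x := by
    refine hasDerivAt_pi.2 fun i => ?_
    fin_cases i
    · exact h1
    · exact h2
    · exact h3
  have := (PiLp.continuousLinearEquiv 2 ℝ (fun _ : Fin 3 => ℝ)).symm.hasFDerivAt.comp_hasDerivAt x h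
  have hΦ' : Φ = fun t => WithLp.toLp 2 ![f1 t, f2 t, f3 t] := funext fun t => by rw [← hΦ t]
  have hD' : D = WithLp.toLp 2 ![g1, g2, g3] := by rw [← hD]
  rw [hD', hΦ']
  exact this


/-- For the constant angle surface
`r(u,v) = (u cos θ (cos v, sin v) + γ(v), u sin θ)` with unit normal
`N(v) = (-sin θ cos v, -sin θ sin v, cos θ)`, the normal is independent of `u`, hence the
second fundamental form coefficients `e = ⟪r_uu, N⟫` and `f = ⟪r_uv, N⟫` vanish, and
consequently the Gaussian curvature `K = (eg - f²)/(EG - F²)` vanishes identically. -/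
theorem gaussian_curvature_vanishes
    (θ : ℝ) (I : Set ℝ) (α γ₁ γ₂ : ℝ → ℝ)
    (hγ₁ : ∀ v ∈ I, deriv γ₁ v = Real.cos θ * α v * (-Real.sin v))
    (hγ₂ : ∀ v ∈ I, deriv γ₂ v = Real.cos θ * α v * (Real.cos v))
    (r : ℝ → ℝ → EuclideanSpace ℝ (Fin 3))
    (hr : ∀ u v, r u v =
      ![u * Real.cos θ * Real.cos v + γ₁ v, u * Real.cos θ * Real.sin v + γ₂ v,
        u * Real.sin θ])
    (N : ℝ → EuclideanSpace ℝ (Fin 3))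
    (hN : ∀ v, N v = ![-Real.sin θ * Real.cos v, -Real.sin θ * Real.sin v, Real.cos θ])
    (E F G e f g K : ℝ → ℝ → ℝ)
    (hE : ∀ u v, E u v = inner ℝ (deriv (fun t => r t v) u) (deriv (fun t => r t v) u))
    (hF : ∀ u v, F u v = inner ℝ (deriv (fun t => r t v) u) (deriv (fun t => r u t) v))
    (hG : ∀ u v, G u v = inner ℝ (deriv (fun t => r u t) v) (deriv (fun t => r u t) v))
    (he : ∀ u v, e u v = inner ℝ (deriv (fun t => deriv (fun s => r s v) t) u) (N v))
    (hf : ∀ u v, f u v = inner ℝ (deriv (fun t => deriv (fun s => r s t) u) v) (N v))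
    (hg : ∀ u v, g u v = inner ℝ (deriv (fun t => deriv (fun s => r u s) t) v) (N v))
    (hK : ∀ u v, K u v = (e u v * g u v - f u v ^ 2) / (E u v * G u v - F u v ^ 2))
    (hreg : ∀ u : ℝ, ∀ v ∈ I, E u v * G u v - F u v ^ 2 ≠ 0) :
    ∀ u : ℝ, ∀ v ∈ I,
      (deriv (fun _ : ℝ => N v) u = 0) ∧ e u v = 0 ∧ f u v = 0 ∧ K u v = 0 := by
  -- the u-partial of r is independent of u:
  set c : ℝ → EuclideanSpace ℝ (Fin 3) :=
    fun w => WithLp.toLp 2 ![Real.cos θ * Real.cos w, Real.cos θ * Real.sin w, Real.sin θ] with hc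
  have hru : ∀ (w s₀ : ℝ), HasDerivAt (fun s => r s w) (c w) s₀ := by
    intro w s₀
    refine hasDerivAt_e3 (fun s => hr s w) rfl ?_ ?_ ?_
    · simpa using (((hasDerivAt_id s₀).mul_const (Real.cos θ)).mul_const (Real.cos w)).add_const (γ₁ w)
    · simpa using (((hasDerivAt_id s₀).mul_const (Real.cos θ)).mul_const (Real.sin w)).add_const (γ₂ w)
    · simpa using (hasDerivAt_id s₀).mul_const (Real.sin θ)
  have hderiv_ru : ∀ (w s₀ : ℝ), deriv (fun s => r s w) s₀ = c w := fun w s₀ => (hru w s₀).deriv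
  intro u v hv
  have he0 : e u v = 0 := by
    rw [he]
    have : (fun t => deriv (fun s => r s v) t) = fun _ => c v := funext fun t => hderiv_ru v t
    rw [this, deriv_const]
    exact inner_zero_left _
  have hf0 : f u v = 0 := by
    rw [hf]
    have h1 : (fun t => deriv (fun s => r s t) u) = c := funext fun t => hderiv_ru t u
    have h2 : HasDerivAt c
        (WithLp.toLp 2 ![Real.cos θ * (-Real.sin v), Real.cos θ * Real.cos v, 0] : EuclideanSpace ℝ (Fin 3)) v := by
      refine hasDerivAt_e3 (fun w => rfl) rfl ?_ ?_ ?_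
      · exact (Real.hasDerivAt_cos v).const_mul (Real.cos θ)
      · exact (Real.hasDerivAt_sin v).const_mul (Real.cos θ)
      · exact hasDerivAt_const v (Real.sin θ)
    rw [h1, h2.deriv]
    simp [PiLp.inner_apply, Fin.sum_univ_three, hN]
    ring
  refine ⟨deriv_const u (N v), he0, hf0, ?_⟩
  rw [hK, he0, hf0]
  simp
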